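/- Let r be a positive integer and d, t divisors of r. Then (1/r^s) Σ_{m=1}^{r^s} c_d^s(m) c_t^s(m) equals Φ_s(d^s) if d = t, and 0 otherwise. -/

import Mathlib

open Finset

/-- Generalized s-GCD `(a,b)_s`: the largest `l^s` dividing both `a` and `b`. -/
def sgcd (s a b : ℕ) : ℕ :=
  (Nat.findGreatest (fun l => l ^ s ∣ a ∧ l ^ s ∣ b) (Nat.gcd a b)) ^ s

/-- Klee's function `Φ_s(n)`. -/
def klee (s n : ℕ) : ℕ := ((Finset.Icc 1 n).filter (fun m => sgcd s m n = 1)).card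

/-- Cohen–Ramanujan sum (exponential form). -/
noncomputable def CRsum (s r n : ℕ) : ℂ :=
  ∑ a ∈ (Finset.Icc 1 (r ^ s)).filter (fun a => sgcd s a (r ^ s) = 1),
    Complex.exp (2 * Real.pi * Complex.I * n * a / (r ^ s))

/-- Cohen–Ramanujan sum (divisor form). -/
def CRsumD (s r n : ℕ) : ℤ :=
  ∑ d ∈ r.divisors.filter (fun d => d ^ s ∣ n),
    ArithmeticFunction.moebius (r / d) * (d : ℤ) ^ s

/-- `τ_s(m)`: number of s-th powers dividing `m`. -/
def taus (s m : ℕ) : ℕ := ((Finset.Icc 1 m).filter (fun l => l ^ s ∣ m)).card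

/-- Jordan totient via tuples. -/
def jordanT (s r : ℕ) : ℕ :=
  (Finset.univ.filter (fun v : Fin s → Fin r =>
    Nat.gcd (Finset.univ.gcd (fun i => (v i : ℕ))) r = 1)).card


open Complex Real in
lemma sum_exp_dvd (N k : ℕ) (hN : 0 < N) :
    ∑ m ∈ Finset.Icc 1 N, Complex.exp (2 * Real.pi * Complex.I * k * m / N)
      = if N ∣ k then (N : ℂ) else 0 := by
  have hNc : (N : ℂ) ≠ 0 := Nat.cast_ne_zero.mpr hN.ne'
  have h2pi : (2 * (Real.pi : ℂ) * Complex.I) ≠ 0 := by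
    simp [Real.pi_ne_zero, Complex.I_ne_zero, Complex.ofReal_ne_zero]
  set z := Complex.exp (2 * Real.pi * Complex.I * k / N) with hz
  have hterm : ∀ m : ℕ, Complex.exp (2 * Real.pi * Complex.I * k * m / N) = z ^ m := by
    intro m
    rw [hz, ← Complex.exp_nat_mul]
    congr 1
    field_simp
  have hzN : z ^ N = 1 := by
    rw [hz, ← Complex.exp_nat_mul]
    have he : (N : ℂ) * (2 * Real.pi * Complex.I * k / N) = (k : ℤ) * (2 * Real.pi * Complex.I) := by
      push_cast
      field_simp
    rw [he, Complex.exp_int_mul_two_pi_mul_I]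
  have hz1 : z = 1 ↔ N ∣ k := by
    rw [hz, Complex.exp_eq_one_iff]
    constructor
    · rintro ⟨n, hn⟩
      have h1 : 2 * (Real.pi : ℂ) * Complex.I * ((k : ℂ) / N) = 2 * (Real.pi : ℂ) * Complex.I * n := by
        linear_combination hn
      have h2 : (k : ℂ) / N = n := mul_left_cancel₀ h2pi h1
      have h3 : (k : ℂ) = n * N := by
        field_simp at h2
        linear_combination h2
      have h4 : (k : ℤ) = n * N := by exact_mod_cast h3
      have : (N : ℤ) ∣ (k : ℤ) := ⟨n, by linarith⟩
      exact_mod_cast this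
    · rintro ⟨c, rfl⟩
      refine ⟨c, ?_⟩
      push_cast
      field_simp
  simp_rw [hterm]
  by_cases hdvd : N ∣ k
  · rw [if_pos hdvd]
    simp [hz1.mpr hdvd, Nat.card_Icc]
  · rw [if_neg hdvd]
    have hzne : z ≠ 1 := fun h => hdvd (hz1.mp h)
    rw [← Finset.Ico_add_one_right_eq_Icc, geom_sum_Ico hzne (by omega), pow_succ, hzN, one_mul, pow_one,
      sub_self, zero_div]

lemma sgcd_eq_one_iff {s a n : ℕ} (hs : 0 < s) (ha : 0 < a) (hn : 0 < n) :
    sgcd s a n = 1 ↔ ∀ l, 2 ≤ l → ¬(l ^ s ∣ a ∧ l ^ s ∣ n) := by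
  unfold sgcd
  set P : ℕ → Prop := fun l => l ^ s ∣ a ∧ l ^ s ∣ n with hP
  rw [pow_eq_one_iff_left hs.ne']
  constructor
  · intro h l hl hla
    have hle : l ≤ Nat.gcd a n := by
      have h1 : l ^ s ∣ Nat.gcd a n := Nat.dvd_gcd hla.1 hla.2
      have h2 : l ≤ l ^ s := Nat.le_self_pow hs.ne' l
      have h3 : l ^ s ≤ Nat.gcd a n := Nat.le_of_dvd (Nat.gcd_pos_of_pos_left n ha) h1
      omega
    have h2 := Nat.le_findGreatest (P := P) hle hla
    rw [h] at h2
    omega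
  · intro h
    have hg : 1 ≤ Nat.gcd a n := Nat.one_le_iff_ne_zero.mpr (Nat.gcd_pos_of_pos_left n ha).ne'
    have hP1 : P 1 := by constructor <;> simp
    have h1 : 1 ≤ Nat.findGreatest P (Nat.gcd a n) := Nat.le_findGreatest hg hP1
    have hspec : P (Nat.findGreatest P (Nat.gcd a n)) := Nat.findGreatest_spec hg hP1
    by_contra hc
    exact h (Nat.findGreatest P (Nat.gcd a n)) (Nat.lt_of_le_of_ne h1 (Ne.symm hc)) hspec

lemma dvd_of_sgcd_one {s a d t : ℕ} (hs : 0 < s) (ha : 0 < a) (hd : 0 < d) (ht : 0 < t)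
    (h1 : sgcd s a (d ^ s) = 1) (hdvd : d ^ s ∣ a * t ^ s) : d ∣ t := by
  rw [← Nat.factorization_prime_le_iff_dvd hd.ne' ht.ne']
  intro p pp
  by_contra hc
  push_neg at hc
  have hfac : (d ^ s).factorization ≤ (a * t ^ s).factorization :=
    (Nat.factorization_le_iff_dvd (pow_pos hd s).ne'
      (Nat.mul_ne_zero ha.ne' (pow_pos ht s).ne')).mpr hdvd
  have hfp := hfac p
  rw [Nat.factorization_pow, Nat.factorization_mul ha.ne' (pow_pos ht s).ne',
    Nat.factorization_pow] at hfp
  simp only [Finsupp.smul_apply, Finsupp.add_apply, smul_eq_mul] at hfp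
  have hap : s ≤ a.factorization p := by nlinarith [hc]
  have hpa : p ^ s ∣ a := (pp.pow_dvd_iff_le_factorization ha.ne').mpr hap
  have hpd1 : p ∣ d := (pp.dvd_iff_one_le_factorization hd.ne').mpr (by omega)
  have hpd : p ^ s ∣ d ^ s := pow_dvd_pow_of_dvd hpd1 s
  exact (sgcd_eq_one_iff hs ha (pow_pos hd s)).mp h1 p pp.two_le ⟨hpa, hpd⟩

theorem CRsum_orthogonality (s r d t : ℕ) (hs : 0 < s) (hr : 0 < r)
    (hd : d ∣ r) (ht : t ∣ r) :
    (1 / ((r : ℂ) ^ s)) * ∑ m ∈ Finset.Icc 1 (r ^ s), CRsum s d m * CRsum s t m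
      = if d = t then (klee s (d ^ s) : ℂ) else 0 := by
  have hd0 : 0 < d := Nat.pos_of_dvd_of_pos hd hr
  have ht0 : 0 < t := Nat.pos_of_dvd_of_pos ht hr
  have hN0 : 0 < r ^ s := pow_pos hr s
  have hD0 : 0 < d ^ s := pow_pos hd0 s
  have hT0 : 0 < t ^ s := pow_pos ht0 s
  have hDN : d ^ s ∣ r ^ s := pow_dvd_pow_of_dvd hd s
  have hTN : t ^ s ∣ r ^ s := pow_dvd_pow_of_dvd ht s
  have hNc : ((r : ℂ) ^ s) ≠ 0 := pow_ne_zero s (Nat.cast_ne_zero.mpr hr.ne')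
  have hDc : ((d : ℂ) ^ s) ≠ 0 := pow_ne_zero s (Nat.cast_ne_zero.mpr hd0.ne')
  have hTc : ((t : ℂ) ^ s) ≠ 0 := pow_ne_zero s (Nat.cast_ne_zero.mpr ht0.ne')
  set A := (Finset.Icc 1 (d ^ s)).filter (fun a => sgcd s a (d ^ s) = 1) with hA
  set B := (Finset.Icc 1 (t ^ s)).filter (fun b => sgcd s b (t ^ s) = 1) with hB
  -- condition equivalence
  have hcond : ∀ a b : ℕ, (r ^ s ∣ a * (r ^ s / d ^ s) + b * (r ^ s / t ^ s)) ↔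
      d ^ s * t ^ s ∣ a * t ^ s + b * d ^ s := by
    intro a b
    have e1 : r ^ s / d ^ s * d ^ s = r ^ s := Nat.div_mul_cancel hDN
    have e2 : r ^ s / t ^ s * t ^ s = r ^ s := Nat.div_mul_cancel hTN
    have key : (a * (r ^ s / d ^ s) + b * (r ^ s / t ^ s)) * (d ^ s * t ^ s)
        = (a * t ^ s + b * d ^ s) * r ^ s := by
      have k1 : a * (r ^ s / d ^ s) * (d ^ s * t ^ s) = a * t ^ s * r ^ s := by
        rw [show a * (r ^ s / d ^ s) * (d ^ s * t ^ s) = a * t ^ s * (r ^ s / d ^ s * d ^ s) by ring, e1]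
      have k2 : b * (r ^ s / t ^ s) * (d ^ s * t ^ s) = b * d ^ s * r ^ s := by
        rw [show b * (r ^ s / t ^ s) * (d ^ s * t ^ s) = b * d ^ s * (r ^ s / t ^ s * t ^ s) by ring, e2]
      calc (a * (r ^ s / d ^ s) + b * (r ^ s / t ^ s)) * (d ^ s * t ^ s)
          = a * (r ^ s / d ^ s) * (d ^ s * t ^ s) + b * (r ^ s / t ^ s) * (d ^ s * t ^ s) := by ring
        _ = a * t ^ s * r ^ s + b * d ^ s * r ^ s := by rw [k1, k2]
        _ = (a * t ^ s + b * d ^ s) * r ^ s := by ring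
    rw [← mul_dvd_mul_iff_right (show (d ^ s * t ^ s : ℕ) ≠ 0 by positivity), key,
      mul_comm (r ^ s) (d ^ s * t ^ s), mul_dvd_mul_iff_right (show (r ^ s : ℕ) ≠ 0 from hN0.ne')]
  -- main expansion
  have main : ∑ m ∈ Finset.Icc 1 (r ^ s), CRsum s d m * CRsum s t m
      = ∑ a ∈ A, ∑ b ∈ B,
          (if r ^ s ∣ a * (r ^ s / d ^ s) + b * (r ^ s / t ^ s) then ((r : ℂ) ^ s) else 0) := by
    have step1 : ∀ m : ℕ, CRsum s d m * CRsum s t m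
        = ∑ a ∈ A, ∑ b ∈ B, Complex.exp (2 * Real.pi * Complex.I *
            ((a * (r ^ s / d ^ s) + b * (r ^ s / t ^ s) : ℕ)) * m / ((r ^ s : ℕ))) := by
      intro m
      rw [CRsum, CRsum, Finset.sum_mul_sum]
      refine Finset.sum_congr rfl fun a _ => Finset.sum_congr rfl fun b _ => ?_
      rw [← Complex.exp_add]
      congr 1
      have hNd : ((r ^ s / d ^ s : ℕ) : ℂ) = ((r : ℂ) ^ s) / ((d : ℂ) ^ s) := by
        rw [Nat.cast_div hDN (by exact_mod_cast hDc)]; push_cast; ring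
      have hNt : ((r ^ s / t ^ s : ℕ) : ℂ) = ((r : ℂ) ^ s) / ((t : ℂ) ^ s) := by
        rw [Nat.cast_div hTN (by exact_mod_cast hTc)]; push_cast; ring
      push_cast [hNd, hNt]
      field_simp
    calc ∑ m ∈ Finset.Icc 1 (r ^ s), CRsum s d m * CRsum s t m
        = ∑ m ∈ Finset.Icc 1 (r ^ s), ∑ a ∈ A, ∑ b ∈ B, Complex.exp (2 * Real.pi * Complex.I *
            ((a * (r ^ s / d ^ s) + b * (r ^ s / t ^ s) : ℕ)) * m / ((r ^ s : ℕ))) :=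
          Finset.sum_congr rfl fun m _ => step1 m
      _ = ∑ a ∈ A, ∑ b ∈ B, ∑ m ∈ Finset.Icc 1 (r ^ s), Complex.exp (2 * Real.pi * Complex.I *
            ((a * (r ^ s / d ^ s) + b * (r ^ s / t ^ s) : ℕ)) * m / ((r ^ s : ℕ))) := by
          rw [Finset.sum_comm]
          exact Finset.sum_congr rfl fun a _ => Finset.sum_comm
      _ = ∑ a ∈ A, ∑ b ∈ B,
          (if r ^ s ∣ a * (r ^ s / d ^ s) + b * (r ^ s / t ^ s) then ((r : ℂ) ^ s) else 0) := by
          refine Finset.sum_congr rfl fun a _ => Finset.sum_congr rfl fun b _ => ?_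
          rw [sum_exp_dvd _ _ hN0]
          push_cast
          rfl
  rw [main]
  -- membership facts
  have memA : ∀ a ∈ A, 1 ≤ a ∧ a ≤ d ^ s ∧ sgcd s a (d ^ s) = 1 := by
    intro a haa
    rw [hA, Finset.mem_filter, Finset.mem_Icc] at haa
    exact ⟨haa.1.1, haa.1.2, haa.2⟩
  have memB : ∀ b ∈ B, 1 ≤ b ∧ b ≤ t ^ s ∧ sgcd s b (t ^ s) = 1 := by
    intro b hbb
    rw [hB, Finset.mem_filter, Finset.mem_Icc] at hbb
    exact ⟨hbb.1.1, hbb.1.2, hbb.2⟩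
  by_cases hdt : d = t
  · subst hdt
    rw [if_pos rfl]
    -- B = A
    have hBA : B = A := by rw [hA, hB]
    rw [hBA]
    have inner : ∀ a ∈ A, ∑ b ∈ A,
        (if r ^ s ∣ a * (r ^ s / d ^ s) + b * (r ^ s / d ^ s) then ((r : ℂ) ^ s) else 0)
        = ((r : ℂ) ^ s) := by
      intro a haa
      obtain ⟨ha1, ha2, ha3⟩ := memA a haa
      have hsimp : ∀ b : ℕ, (r ^ s ∣ a * (r ^ s / d ^ s) + b * (r ^ s / d ^ s)) ↔ d ^ s ∣ a + b := by
        intro b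
        rw [hcond a b, show a * d ^ s + b * d ^ s = (a + b) * (d ^ s) by ring,
          mul_dvd_mul_iff_right (show (d ^ s : ℕ) ≠ 0 from hD0.ne')]
      simp_rw [hsimp]
      rw [← Finset.sum_filter]
      by_cases hD1 : d ^ s = 1
      · -- A = {1}, filter is everything
        have : A.filter (fun b => d ^ s ∣ a + b) = A := by
          apply Finset.filter_true_of_mem
          intro b _; rw [hD1]; exact one_dvd _
        have hsg : sgcd s 1 1 = 1 := by
          rw [sgcd_eq_one_iff hs one_pos one_pos]
          intro l hl ⟨hla, _⟩
          rw [Nat.dvd_one, pow_eq_one_iff_left hs.ne'] at hla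
          omega
        rw [this, hA, hD1]
        have hone : (Finset.Icc 1 1).filter (fun a => sgcd s a 1 = 1) = {1} := by
          rw [Finset.Icc_self, Finset.filter_singleton, if_pos hsg]
        rw [hone]
        simp
      · -- d ^ s ≥ 2 : a < d ^ s and filter = {d ^ s - a}
        have hD2 : 2 ≤ d ^ s := by omega
        have hne : ∀ x ∈ A, x < d ^ s := by
          intro x hx
          obtain ⟨hx1, hx2, hx3⟩ := memA x hx
          rcases Nat.lt_or_ge x (d ^ s) with h | h
          · exact h
          · exfalso
            have hxd : x = d ^ s := le_antisymm hx2 h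
            have hd2 : 2 ≤ d := by
              by_contra hcc
              push_neg at hcc
              have hde : d = 1 := by omega
              subst hde
              simp at hD1
            exact (sgcd_eq_one_iff hs hx1 hD0).mp hx3 d hd2 ⟨hxd ▸ dvd_rfl, dvd_rfl⟩
        have hfilter : A.filter (fun b => d ^ s ∣ a + b) = {d ^ s - a} := by
          ext b
          simp only [Finset.mem_filter, Finset.mem_singleton]
          constructor
          · rintro ⟨hbA, hdvd⟩
            obtain ⟨hb1, hb2, hb3⟩ := memA b hbA
            have hblt := hne b hbA
            have halt := hne a haa
            have : a + b = d ^ s := by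
              rcases hdvd with ⟨c, hc⟩
              have hc1 : c = 1 := by nlinarith
              subst hc1
              omega
            omega
          · rintro rfl
            have halt := hne a haa
            refine ⟨?_, ⟨1, by omega⟩⟩
            rw [hA, Finset.mem_filter, Finset.mem_Icc]
            refine ⟨⟨by omega, by omega⟩, ?_⟩
            rw [sgcd_eq_one_iff hs (by omega) hD0]
            intro l hl ⟨hla, hld⟩
            have : l ^ s ∣ a := by
              have := Nat.dvd_sub hld hla
              rwa [show d ^ s - (d ^ s - a) = a by omega] at this
            exact (sgcd_eq_one_iff hs ha1 hD0).mp ha3 l hl ⟨this, hld⟩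
        rw [hfilter, Finset.sum_singleton]
    rw [Finset.sum_congr rfl inner, Finset.sum_const, nsmul_eq_mul]
    rw [klee, ← hA]
    field_simp
  · rw [if_neg hdt]
    have : ∀ a ∈ A, ∑ b ∈ B,
        (if r ^ s ∣ a * (r ^ s / d ^ s) + b * (r ^ s / t ^ s) then ((r : ℂ) ^ s) else 0) = 0 := by
      intro a haa
      apply Finset.sum_eq_zero
      intro b hbb
      obtain ⟨ha1, ha2, ha3⟩ := memA a haa
      obtain ⟨hb1, hb2, hb3⟩ := memB b hbb
      rw [if_neg]
      intro hcc
      rw [hcond a b] at hcc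
      have c1 : d ^ s ∣ a * t ^ s := by
        have h1 : d ^ s ∣ a * t ^ s + b * d ^ s := dvd_trans (dvd_mul_right _ _) hcc
        have h2 : d ^ s ∣ b * d ^ s := dvd_mul_left _ _
        have := Nat.dvd_sub h1 h2
        rwa [Nat.add_sub_cancel] at this
      have c2 : t ^ s ∣ b * d ^ s := by
        have h1 : t ^ s ∣ a * t ^ s + b * d ^ s := dvd_trans (dvd_mul_left _ _) hcc
        have h2 : t ^ s ∣ a * t ^ s := dvd_mul_left _ _
        have := Nat.dvd_sub h1 h2
        rwa [show a * t ^ s + b * d ^ s - a * t ^ s = b * d ^ s by omega] at this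
      exact hdt (Nat.dvd_antisymm (dvd_of_sgcd_one hs ha1 hd0 ht0 ha3 c1)
        (dvd_of_sgcd_one hs hb1 ht0 hd0 hb3 c2))
    rw [Finset.sum_congr rfl this, Finset.sum_const, smul_zero, mul_zero]
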